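/- For every nonzero rational number n, there exist rational numbers u, v, w with u² + v² = w² and n = uv/2 if and only if there exist rational numbers x, y with y ≠ 0 and y² = x³ − n²x. -/

import Mathlib

/-- For every nonzero rational number `n`, there exist rational `u, v, w` with
`u² + v² = w²` and `n = uv/2` if and only if there is a rational point `(x, y)`
with `y ≠ 0` on the elliptic curve `y² = x³ - n²x`. -/
theorem congruent_iff_rationalPoint (n : ℚ) (hn : n ≠ 0) :
    (∃ u v w : ℚ, u ^ 2 + v ^ 2 = w ^ 2 ∧ n = u * v / 2) ↔
      (∃ x y : ℚ, y ≠ 0 ∧ y ^ 2 = x ^ 3 - n ^ 2 * x) := by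
  constructor
  · rintro ⟨u, v, w, h1, h2⟩
    have hv : v ≠ 0 := by
      rintro rfl; apply hn; rw [h2]; ring
    have hd : w - u ≠ 0 := by
      intro h
      have hw : w = u := by linarith [sub_eq_zero.mp h]
      apply hv
      have : v ^ 2 = 0 := by rw [hw] at h1; linarith
      exact pow_eq_zero_iff (by norm_num) |>.mp this
    refine ⟨n * v / (w - u), 2 * n ^ 2 / (w - u), ?_, ?_⟩
    · positivity
    · subst h2
      field_simp
      linear_combination (-u^3) * h1
  · rintro ⟨x, y, hy, hxy⟩
    refine ⟨(x ^ 2 - n ^ 2) / y, 2 * n * x / y, (x ^ 2 + n ^ 2) / y, ?_, ?_⟩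
    · field_simp
      ring
    · field_simp
      linear_combination hxy
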